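/- Let k ≥ 2 and 1 ≤ m ≤ 2k − 1 be integers. Then the affine hypersurface {(z₁,z₂,z₃,z₄) ∈ ℂ⁴ : z₁ z₂^k + z₃² + z₄² = z₁^m + 1} is smooth: at every point of this hypersurface, at least one of the four partial derivatives z₂^k − m z₁^{m−1}, k z₁ z₂^{k−1}, 2z₃, 2z₄ of the defining polynomial z₁ z₂^k + z₃² + z₄² − z₁^m − 1 is nonzero. -/
import Mathlib


/-- For `k ≥ 2` and `1 ≤ m ≤ 2k − 1`, the hypersurface
`{z₁ z₂^k + z₃² + z₄² = z₁^m + 1}` is smooth: at each of its points at least one of the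
partial derivatives `z₂^k − m z₁^{m−1}`, `k z₁ z₂^{k−1}`, `2z₃`, `2z₄` is nonzero. -/
theorem stmt7 (k m : ℕ) (hk : 2 ≤ k) (hm1 : 1 ≤ m) (hm2 : m ≤ 2 * k - 1) :
    ∀ z₁ z₂ z₃ z₄ : ℂ, z₁ * z₂ ^ k + z₃ ^ 2 + z₄ ^ 2 = z₁ ^ m + 1 →
      (z₂ ^ k - (m : ℂ) * z₁ ^ (m - 1) ≠ 0 ∨ (k : ℂ) * z₁ * z₂ ^ (k - 1) ≠ 0 ∨
        2 * z₃ ≠ 0 ∨ 2 * z₄ ≠ 0) := by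
  intro z₁ z₂ z₃ z₄ heq
  by_contra h
  push_neg at h
  obtain ⟨h1, h2, h3, h4⟩ := h
  have hz3 : z₃ = 0 := by
    have := mul_eq_zero.mp h3
    simpa using this
  have hz4 : z₄ = 0 := by
    have := mul_eq_zero.mp h4
    simpa using this
  have hkC : (k : ℂ) ≠ 0 := Nat.cast_ne_zero.mpr (by omega)
  have hmC : (m : ℂ) ≠ 0 := Nat.cast_ne_zero.mpr (by omega)
  have hm0 : m ≠ 0 := by omega
  -- z₁ = 0 leads to 0 = 1 in the equation
  have hz1 : z₁ ≠ 0 := by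
    intro hz1
    rw [hz1, hz3, hz4] at heq
    simp [zero_pow hm0] at heq
  -- hence z₂ = 0 from h2
  have hz2 : z₂ = 0 := by
    rcases mul_eq_zero.mp h2 with h | h
    · rcases mul_eq_zero.mp h with h | h
      · exact absurd h hkC
      · exact absurd h hz1
    · exact pow_eq_zero_iff (by omega : k - 1 ≠ 0) |>.mp h
  -- then h1 gives m * z₁^(m-1) = 0
  rw [hz2, zero_pow (by omega : k ≠ 0), zero_sub, neg_eq_zero] at h1
  rcases mul_eq_zero.mp h1 with h | h
  · exact hmC h
  · rcases Nat.eq_or_lt_of_le hm1 with hm | hm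
    · rw [← hm] at h
      simp at h
    · exact hz1 (pow_eq_zero_iff (by omega : m - 1 ≠ 0) |>.mp h)
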